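/- The Fourier transform ∫ φ(s; 0, γ, σ) e^{iτs} ds of the skewed Laplace density centered at μ = 0 equals (C(τ) + iγτ)/(C(τ)² + γ²τ²), where C(τ) = 1 + σ²τ²/2. -/

import Mathlib

open MeasureTheory Complex Set Filter

lemma cexp_integrableOn_Ioi (c : ℂ) (hc : c.re < 0) :
    IntegrableOn (fun s : ℝ => Complex.exp (c * s)) (Ioi (0:ℝ)) := by
  have hg : IntegrableOn (fun s : ℝ => Real.exp (-(-c.re) * s)) (Ioi (0:ℝ)) :=
    exp_neg_integrableOn_Ioi 0 (by linarith)
  apply Integrable.mono' hg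
  · exact (Complex.continuous_exp.comp (continuous_const.mul Complex.continuous_ofReal)).aestronglyMeasurable
  · filter_upwards with s
    rw [Complex.norm_exp]
    simp [Complex.mul_re]

lemma integral_cexp_mul_Ioi (c : ℂ) (hc : c.re < 0) :
    ∫ s in Ioi (0:ℝ), Complex.exp (c * s) = -c⁻¹ := by
  have hc0 : c ≠ 0 := fun h => by simp [h] at hc
  refine tendsto_nhds_unique
    (intervalIntegral_tendsto_integral_Ioi 0 (cexp_integrableOn_Ioi c hc) tendsto_id) ?_
  have heq : ∀ X : ℝ, ∫ s in (0:ℝ)..X, Complex.exp (c*s) = (Complex.exp (c*X) - 1)/c := by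
    intro X
    rw [integral_exp_mul_complex hc0]
    simp
  simp only [id, heq]
  have h1 : Tendsto (fun X : ℝ => Complex.exp (c*X)) atTop (nhds 0) := by
    rw [tendsto_zero_iff_norm_tendsto_zero]
    have : ∀ X : ℝ, ‖Complex.exp (c*X)‖ = Real.exp (c.re * X) := by
      intro X; rw [Complex.norm_exp]; simp [Complex.mul_re]
    simp only [this]
    exact Real.tendsto_exp_atBot.comp ((tendsto_const_mul_atBot_of_neg hc).mpr tendsto_id)
  have := (h1.sub_const 1).div_const c
  simpa [neg_div, one_div] using this

lemma cexp_integrableOn_Iio (c : ℂ) (hc : 0 < c.re) :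
    IntegrableOn (fun s : ℝ => Complex.exp (c * s)) (Iio (0:ℝ)) := by
  rw [← (Measure.measurePreserving_neg (volume : Measure ℝ)).integrableOn_comp_preimage
      (Homeomorph.neg ℝ).measurableEmbedding]
  simp only [Function.comp_def, neg_preimage, neg_Iio, neg_zero]
  have := cexp_integrableOn_Ioi (-c) (by simpa using hc)
  simpa [Complex.ofReal_neg, mul_neg, neg_mul] using this

lemma integral_cexp_mul_Iio (c : ℂ) (hc : 0 < c.re) :
    ∫ s in Iio (0:ℝ), Complex.exp (c * s) = c⁻¹ := by
  rw [← integral_Iic_eq_integral_Iio]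
  have h := integral_comp_neg_Ioi (0:ℝ) (fun s : ℝ => Complex.exp (c * s))
  rw [neg_zero] at h
  rw [← h]
  have h2 := integral_cexp_mul_Ioi (-c) (by simpa using hc)
  simp only [Complex.ofReal_neg, mul_neg, neg_mul] at h2 ⊢
  rw [h2, inv_neg, neg_neg]

/-- The Fourier transform (with kernel e^{iτs}) of the skewed Laplace density
centered at 0 equals (C(τ) + iγτ)/(C(τ)² + γ²τ²) with C(τ) = 1 + σ²τ²/2. -/
theorem skewedLaplace_fourier
    (γ σ : ℝ) (hσ : 0 < σ)
    (κ : ℝ) (hκ : κ = Real.sqrt 2 * σ / (γ + Real.sqrt (2 * σ ^ 2 + γ ^ 2)))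
    (φ : ℝ → ℝ)
    (hφ : ∀ s, φ s =
      if s < 0 then
        (Real.sqrt 2 / σ) * (κ / (1 + κ ^ 2)) * Real.exp ((Real.sqrt 2 / (σ * κ)) * s)
      else
        (Real.sqrt 2 / σ) * (κ / (1 + κ ^ 2)) * Real.exp (-(Real.sqrt 2 * κ / σ) * s))
    (τ : ℝ) (C : ℝ) (hC : C = 1 + σ ^ 2 * τ ^ 2 / 2) :
    ∫ s : ℝ, (φ s : ℂ) * Complex.exp (Complex.I * τ * s) =
      ((C : ℂ) + Complex.I * γ * τ) / ((C : ℂ) ^ 2 + (γ : ℂ) ^ 2 * (τ : ℂ) ^ 2) := by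
  have h2 : Real.sqrt 2 * Real.sqrt 2 = 2 := Real.mul_self_sqrt (by norm_num)
  have h2pos : (0:ℝ) < Real.sqrt 2 := Real.sqrt_pos.mpr (by norm_num)
  set R := Real.sqrt (2 * σ ^ 2 + γ ^ 2) with hR
  have hR2 : R ^ 2 = 2 * σ ^ 2 + γ ^ 2 := Real.sq_sqrt (by positivity)
  have hγR : 0 < γ + R := by
    have h1 : |γ| < R := by
      rw [hR, ← Real.sqrt_sq_eq_abs]
      exact Real.sqrt_lt_sqrt (sq_nonneg γ) (by nlinarith)
    have := neg_abs_le γ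
    linarith [(abs_lt.mp h1).1, (abs_lt.mp h1).2]
  have hκpos : 0 < κ := by rw [hκ]; positivity
  have hκ0 : κ ≠ 0 := ne_of_gt hκpos
  have hσ0 : σ ≠ 0 := ne_of_gt hσ
  set a := Real.sqrt 2 * κ / σ with haa
  set b := Real.sqrt 2 / (σ * κ) with hbb
  set A := Real.sqrt 2 / σ * (κ / (1 + κ ^ 2)) with hAA
  have ha : 0 < a := by positivity
  have hb : 0 < b := by positivity
  have h1κ : (0:ℝ) < 1 + κ ^ 2 := by positivity
  have hab : a * b * σ ^ 2 = 2 := by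
    rw [haa, hbb]; field_simp; linear_combination h2
  have hba : (b - a) * σ ^ 2 = 2 * γ := by
    rw [haa, hbb, hκ]
    have hγR0 : γ + R ≠ 0 := ne_of_gt hγR
    field_simp
    linear_combination hR2 - σ^2*h2
  have hAab : A * (a + b) * σ ^ 2 = 2 := by
    rw [haa, hbb, hAA]; field_simp; linear_combination (1+κ^2)*h2
  -- complex versions
  have hab' : (a:ℂ) * b * (σ:ℂ)^2 = 2 := by exact_mod_cast hab
  have hba' : ((b:ℂ) - a) * (σ:ℂ)^2 = 2 * γ := by exact_mod_cast hba
  have hAab' : (A:ℂ) * ((a:ℂ) + b) * (σ:ℂ)^2 = 2 := by exact_mod_cast hAab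
  have hσ0' : (σ:ℂ) ≠ 0 := Complex.ofReal_ne_zero.mpr hσ0
  set c₁ : ℂ := (b:ℂ) + Complex.I * τ with hc₁def
  set c₂ : ℂ := -(a:ℂ) + Complex.I * τ with hc₂def
  have hc₁re : 0 < c₁.re := by simp [hc₁def]; exact hb
  have hc₂re : c₂.re < 0 := by simp [hc₂def]; exact ha
  have hc₁0 : c₁ ≠ 0 := fun h => by simp [h] at hc₁re
  have hc₂0 : c₂ ≠ 0 := fun h => by simp [h] at hc₂re
  have hCpos : 0 < C := by rw [hC]; positivity
  -- integrand equalities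
  have hfeq₁ : ∀ s ∈ Iio (0:ℝ),
      (φ s : ℂ) * Complex.exp (Complex.I * τ * s) = (A:ℂ) * Complex.exp (c₁ * s) := by
    intro s hs
    rw [hφ s, if_pos (mem_Iio.mp hs)]
    push_cast
    rw [mul_assoc, ← Complex.exp_add, hc₁def, hbb]
    ring_nf
  have hfeq₂ : ∀ s ∈ Ici (0:ℝ),
      (φ s : ℂ) * Complex.exp (Complex.I * τ * s) = (A:ℂ) * Complex.exp (c₂ * s) := by
    intro s hs
    rw [hφ s, if_neg (not_lt.mpr (mem_Ici.mp hs))]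
    push_cast
    rw [mul_assoc, ← Complex.exp_add, hc₂def, haa]
    ring_nf
  have hint₁ : IntegrableOn (fun s : ℝ => (φ s : ℂ) * Complex.exp (Complex.I * τ * s)) (Iio 0) := by
    have h' : IntegrableOn (fun s : ℝ => (A:ℂ) * Complex.exp (c₁ * s)) (Iio 0) :=
      (cexp_integrableOn_Iio c₁ hc₁re).const_mul (A:ℂ)
    exact h'.congr_fun (fun s hs => (hfeq₁ s hs).symm) measurableSet_Iio
  have hint₂ : IntegrableOn (fun s : ℝ => (φ s : ℂ) * Complex.exp (Complex.I * τ * s)) (Ici 0) := by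
    rw [integrableOn_Ici_iff_integrableOn_Ioi]
    have h' : IntegrableOn (fun s : ℝ => (A:ℂ) * Complex.exp (c₂ * s)) (Ioi 0) :=
      (cexp_integrableOn_Ioi c₂ hc₂re).const_mul (A:ℂ)
    exact h'.congr_fun (fun s hs => (hfeq₂ s (Ioi_subset_Ici_self hs)).symm) measurableSet_Ioi
  rw [← intervalIntegral.integral_Iio_add_Ici hint₁ hint₂]
  rw [setIntegral_congr_fun measurableSet_Iio hfeq₁,
      setIntegral_congr_fun measurableSet_Ici hfeq₂]
  rw [integral_Ici_eq_integral_Ioi, integral_const_mul, integral_const_mul,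
      integral_cexp_mul_Iio c₁ hc₁re, integral_cexp_mul_Ioi c₂ hc₂re]
  -- algebra
  have hC' : (C:ℂ) = 1 + (σ:ℂ)^2*(τ:ℂ)^2/2 := by rw [hC]; push_cast; ring
  have key : c₁ * -c₂ * (σ:ℂ)^2 = ((C:ℂ) - Complex.I*γ*τ) * 2 := by
    rw [hc₁def, hc₂def]
    linear_combination -2*hC' + hab' - Complex.I*(τ:ℂ)*hba' - (τ:ℂ)^2*(σ:ℂ)^2*Complex.I_sq
  have hA2 : (A:ℂ) * ((a:ℂ) + b) = 2/(σ:ℂ)^2 := by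
    field_simp; linear_combination hAab'
  have h2σ0 : (2:ℂ)/(σ:ℂ)^2 ≠ 0 := by
    apply div_ne_zero (by norm_num) (pow_ne_zero _ hσ0')
  have hkey : c₁ * -c₂ = ((C:ℂ) - Complex.I*γ*τ) * (2/(σ:ℂ)^2) := by
    field_simp; linear_combination key
  have hCne : (C:ℂ) - Complex.I*γ*τ ≠ 0 := by
    intro h
    have h2' := congrArg Complex.re h
    simp [Complex.sub_re, Complex.mul_re, Complex.mul_im] at h2'
    linarith
  have hden : (C:ℂ)^2 + (γ:ℂ)^2*(τ:ℂ)^2 ≠ 0 := by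
    have hpos : (0:ℝ) < C^2 + γ^2*τ^2 := by positivity
    intro h
    have : ((C^2 + γ^2*τ^2 : ℝ):ℂ) = 0 := by push_cast; linear_combination h
    exact hpos.ne' (by exact_mod_cast this)
  calc (A:ℂ) * c₁⁻¹ + (A:ℂ) * -c₂⁻¹
      = ((A:ℂ)*((a:ℂ)+b)) / (c₁ * -c₂) := by
        have hne : c₁ * -c₂ ≠ 0 := mul_ne_zero hc₁0 (neg_ne_zero.mpr hc₂0)
        rw [eq_div_iff hne]
        have hsum : (a:ℂ) + b = c₁ + -c₂ := by rw [hc₁def, hc₂def]; ring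
        rw [hsum]
        field_simp [hc₁0, hc₂0]
        ring
    _ = ((C:ℂ) - Complex.I*γ*τ)⁻¹ := by
        rw [hA2, hkey, mul_comm ((C:ℂ) - Complex.I*(γ:ℂ)*(τ:ℂ)) (2/(σ:ℂ)^2),
          div_mul_cancel_left₀ h2σ0]
    _ = ((C : ℂ) + Complex.I * γ * τ) / ((C : ℂ) ^ 2 + (γ : ℂ) ^ 2 * (τ : ℂ) ^ 2) := by
        rw [inv_eq_one_div, div_eq_div_iff hCne hden]
        linear_combination (γ:ℂ)^2*(τ:ℂ)^2*Complex.I_sq
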